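/- (Implicitly defined harmonic morphisms, k = 1.) Let W ⊆ ℂ^m × ℂ and V ⊆ ℂ be open, let f : W → ℂ and M : V → so(m,ℂ) be holomorphic, and define F(q,z) = f(q − M(z)q̄, z). Let z : U → V be a smooth map on an open set U ⊆ ℂ^m with F(q, z(q)) = 0 and (∂F/∂z)(q, z(q)) ≠ 0 for all q ∈ U. Then z is (M∘z)-holomorphic, Δz = 0 and Σ_{i=1}^{2m} (∂z/∂x^i)² = 0 on U (so z is a harmonic morphism), and z is submersive (its real differential has rank 2) at every point q at which the vector of partial derivatives of F with respect to the variables q^1,…,q^m, q̄^1,…,q̄^m, evaluated at (q, z(q)), is nonzero. -/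

import Mathlib

open Complex BigOperators Matrix

/-- Partial derivative in the direction of the real coordinate `x^{2j-1}`,
identifying `ℝ^{2m} ≅ ℂ^m` via `q^j = x^{2j-1} + i x^{2j}`. -/
noncomputable def pdRe {m : ℕ} (f : (Fin m → ℂ) → ℂ) (j : Fin m) (x : Fin m → ℂ) : ℂ :=
  fderiv ℝ f x (Pi.single j 1)

/-- Partial derivative in the direction of the real coordinate `x^{2j}`. -/
noncomputable def pdIm {m : ℕ} (f : (Fin m → ℂ) → ℂ) (j : Fin m) (x : Fin m → ℂ) : ℂ :=
  fderiv ℝ f x (Pi.single j Complex.I)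

/-- Wirtinger derivative `∂f/∂q^j = ½(∂f/∂x^{2j-1} − i ∂f/∂x^{2j})`. -/
noncomputable def wdq {m : ℕ} (f : (Fin m → ℂ) → ℂ) (j : Fin m) (x : Fin m → ℂ) : ℂ :=
  (pdRe f j x - Complex.I * pdIm f j x) / 2

/-- Wirtinger derivative `∂f/∂q̄^j = ½(∂f/∂x^{2j-1} + i ∂f/∂x^{2j})`. -/
noncomputable def wdqbar {m : ℕ} (f : (Fin m → ℂ) → ℂ) (j : Fin m) (x : Fin m → ℂ) : ℂ :=
  (pdRe f j x + Complex.I * pdIm f j x) / 2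

/-- Laplacian `Δf = Σ_{i=1}^{2m} ∂²f/(∂x^i)²`. -/
noncomputable def lap {m : ℕ} (f : (Fin m → ℂ) → ℂ) (x : Fin m → ℂ) : ℂ :=
  ∑ j, (pdRe (fun y => pdRe f j y) j x + pdIm (fun y => pdIm f j y) j x)

/-- The horizontal weak conformality quantity `Σ_{i=1}^{2m} (∂f/∂x^i)²`. -/
noncomputable def hwc {m : ℕ} (f : (Fin m → ℂ) → ℂ) (x : Fin m → ℂ) : ℂ :=
  ∑ j, ((pdRe f j x) ^ 2 + (pdIm f j x) ^ 2)

theorem clm_eval_zero' {E F : Type*} [NormedAddCommGroup E] [NormedSpace ℝ E]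
    [NormedAddCommGroup F] [NormedSpace ℝ F]
    {f : E → F} {L : E →L[ℝ] F} {x : E} (h : HasFDerivAt f L x)
    (h0 : f =ᶠ[nhds x] fun _ => 0) (v : E) : L v = 0 := by
  have hL : L = fderiv ℝ f x := h.fderiv.symm
  have h2 : fderiv ℝ f x = fderiv ℝ (fun _ : E => (0:F)) x := h0.fderiv_eq
  rw [hL, h2, fderiv_fun_const]; rfl

theorem A_pi' {m : ℕ} (A : ((Fin m → ℂ) × ℂ) →L[ℂ] ℂ) (u : Fin m → ℂ) :
    A (u, 0) = ∑ i, u i * A (Pi.single i 1, 0) := by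
  have h : ((u, (0:ℂ)) : (Fin m → ℂ) × ℂ)
      = ∑ i, u i • (((Pi.single i 1 : Fin m → ℂ), (0:ℂ)) : (Fin m → ℂ) × ℂ) := by
    apply Prod.ext
    · rw [Prod.fst_sum]; funext x; simp [Finset.sum_apply, Pi.single_apply, mul_ite]
    · rw [Prod.snd_sum]; simp
  rw [h, map_sum]; simp only [_root_.map_smul, smul_eq_mul]


theorem sum_skew' {m : ℕ} (A s : Fin m → Fin m → ℂ) (hA : ∀ i j, A i j = -A j i)
    (hs : ∀ i j, s i j = s j i) : ∑ i, ∑ j, A i j * s i j = 0 := by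
  have h : (∑ i, ∑ j, A i j * s i j) = -∑ i, ∑ j, A i j * s i j := by
    nth_rewrite 1 [Finset.sum_comm]
    rw [← Finset.sum_neg_distrib]
    refine Finset.sum_congr rfl fun j _ => ?_
    rw [← Finset.sum_neg_distrib]
    refine Finset.sum_congr rfl fun i _ => ?_
    rw [hA i j, hs i j]; ring
  linear_combination h / 2

theorem hasFDerivAt_div_const' {E : Type*} [NormedAddCommGroup E] [NormedSpace ℝ E]
    {f : E → ℂ} {L : E →L[ℝ] ℂ} {x : E} (h : HasFDerivAt f L x) (c : ℂ) :
    HasFDerivAt (fun y => f y / c) (c⁻¹ • L) x := by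
  have heq : (fun y => f y / c) = fun y => c⁻¹ * f y := funext fun y => by ring
  rw [heq]
  simpa using h.const_mul c⁻¹

theorem key {m : ℕ}
    (W : Set ((Fin m → ℂ) × ℂ)) (hW : IsOpen W)
    (V : Set ℂ) (hV : IsOpen V)
    (f : (Fin m → ℂ) × ℂ → ℂ) (hf : DifferentiableOn ℂ f W)
    (M : ℂ → Matrix (Fin m) (Fin m) ℂ)
    (hM : ∀ i j, DifferentiableOn ℂ (fun w => M w i j) V)
    (F : (Fin m → ℂ) → ℂ → ℂ)
    (hF : ∀ q z, F q z = f (q - (M z).mulVec (fun i => starRingEnd ℂ (q i)), z))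
    (U : Set (Fin m → ℂ)) (hU : IsOpen U)
    (z : (Fin m → ℂ) → ℂ) (hz : ContDiffOn ℝ (⊤ : ℕ∞) z U)
    (hzV : Set.MapsTo z U V)
    (hmem : ∀ q ∈ U, (q - (M (z q)).mulVec (fun i => starRingEnd ℂ (q i)), z q) ∈ W)
    (hsol : ∀ q ∈ U, F q (z q) = 0)
    (hFz : ∀ q ∈ U, deriv (fun zz => F q zz) (z q) ≠ 0)
    (q₀ : Fin m → ℂ) (hq : q₀ ∈ U) :
    ∃ (a : Fin m → ℂ) (c' : ℂ), c' ≠ 0 ∧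
      (∀ v, fderiv ℝ z q₀ v
          = ((∑ j, (∑ i, M (z q₀) i j * a i) * starRingEnd ℂ (v j)) - ∑ i, a i * v i) / c') ∧
      (∀ i, wdq (fun p => F p (z q₀)) i q₀ = a i) ∧
      (∀ i, wdqbar (fun p => F p (z q₀)) i q₀ = -∑ k, M (z q₀) k i * a k) := by
  have hzq : z q₀ ∈ V := hzV hq
  have hzd : DifferentiableAt ℝ z q₀ :=
    (hz.contDiffAt (hU.mem_nhds hq)).differentiableAt (by norm_cast)
  have hpW : (q₀ - (M (z q₀)).mulVec (fun i => starRingEnd ℂ (q₀ i)), z q₀) ∈ W := hmem q₀ hq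
  have hfd : DifferentiableAt ℂ f (q₀ - (M (z q₀)).mulVec (fun i => starRingEnd ℂ (q₀ i)), z q₀) :=
    (hf _ hpW).differentiableAt (hW.mem_nhds hpW)
  set p : (Fin m → ℂ) × ℂ := (q₀ - (M (z q₀)).mulVec (fun i => starRingEnd ℂ (q₀ i)), z q₀)
    with hp
  set A : ((Fin m → ℂ) × ℂ) →L[ℂ] ℂ := fderiv ℂ f p with hA
  have hfA : HasFDerivAt f (A.restrictScalars ℝ) p := (hfd.hasFDerivAt).restrictScalars ℝ
  set a : Fin m → ℂ := fun i => A (Pi.single i 1, 0) with ha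
  set m' : Fin m → Fin m → ℂ := fun i j => deriv (fun w => M w i j) (z q₀) with hm'
  have hMd : ∀ i j, HasDerivAt (fun w => M w i j) (m' i j) (z q₀) :=
    fun i j => ((hM i j _ hzq).differentiableAt (hV.mem_nhds hzq)).hasDerivAt
  set D : (Fin m → ℂ) →L[ℝ] ℂ := fderiv ℝ z q₀ with hDdef
  -- the z-derivative of F q₀
  have hgz : HasDerivAt (fun zz : ℂ => ((q₀ - (M zz).mulVec fun i => starRingEnd ℂ (q₀ i)), zz))
      ((fun i => -(∑ j, m' i j * starRingEnd ℂ (q₀ j)), 1) : (Fin m → ℂ) × ℂ) (z q₀) := by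
    apply HasDerivAt.prodMk _ (hasDerivAt_id _)
    refine (hasDerivAt_pi (φ := fun zz i => q₀ i - ∑ j, M zz i j * starRingEnd ℂ (q₀ j))
      (φ' := fun i => -(∑ j, m' i j * starRingEnd ℂ (q₀ j))) (x := z q₀)).mpr ?_
    intro i
    have h1 : HasDerivAt (fun zz : ℂ => q₀ i - ∑ j, M zz i j * starRingEnd ℂ (q₀ j))
        (0 - ∑ j, m' i j * starRingEnd ℂ (q₀ j)) (z q₀) :=
      (hasDerivAt_const _ _).sub (HasDerivAt.fun_sum fun j _ => (hMd i j).mul_const _)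
    simpa using h1
  have hFq : HasDerivAt (fun zz => F q₀ zz)
      (A ((fun i => -(∑ j, m' i j * starRingEnd ℂ (q₀ j))), 1)) (z q₀) := by
    have hcomp := hfd.hasFDerivAt.comp_hasDerivAt_of_eq (x := z q₀) (hf := hgz) (hy := hp)
    have heq : (fun zz => F q₀ zz)
        = fun zz : ℂ => f ((q₀ - (M zz).mulVec fun i => starRingEnd ℂ (q₀ i)), zz) :=
      funext fun zz => hF q₀ zz
    rw [heq]
    exact hcomp
  set c' : ℂ := A ((fun i => -(∑ j, m' i j * starRingEnd ℂ (q₀ j))), 1) with hc'def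
  have hc0 : c' ≠ 0 := by
    have := hFz q₀ hq
    rwa [hFq.deriv] at this

  -- conj is ℝ-CLM
  have hconj : ∀ j : Fin m, HasFDerivAt (fun q : Fin m → ℂ => starRingEnd ℂ (q j))
      (((RCLike.conjCLE (K := ℂ)).toContinuousLinearMap).comp (ContinuousLinearMap.proj j)) q₀ := by
    intro j
    have h := (((RCLike.conjCLE (K := ℂ)).toContinuousLinearMap).comp
      (ContinuousLinearMap.proj (R := ℝ) (φ := fun _ : Fin m => ℂ) j)).hasFDerivAt (x := q₀)
    have heq : (⇑(((RCLike.conjCLE (K := ℂ)).toContinuousLinearMap).comp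
        (ContinuousLinearMap.proj (R := ℝ) (φ := fun _ : Fin m => ℂ) j)) : (Fin m → ℂ) → ℂ)
        = fun q => starRingEnd ℂ (q j) := by
      funext q
      simp
    rwa [heq] at h
  -- chain rule for matrix entries composed with z
  have hMzd : ∀ i j, HasFDerivAt (fun q => M (z q) i j)
      (((((1 : ℂ →L[ℂ] ℂ).smulRight (m' i j)).restrictScalars ℝ)).comp D) q₀ :=
    fun i j => HasFDerivAt.comp (x := q₀) (((hMd i j).hasFDerivAt).restrictScalars ℝ)
      hzd.hasFDerivAt
  set Lψ : Fin m → ((Fin m → ℂ) →L[ℝ] ℂ) := fun i =>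
    ContinuousLinearMap.proj i - ∑ j, (M (z q₀) i j •
        (((RCLike.conjCLE (K := ℂ)).toContinuousLinearMap).comp (ContinuousLinearMap.proj j))
      + starRingEnd ℂ (q₀ j) •
        (((((1 : ℂ →L[ℂ] ℂ).smulRight (m' i j)).restrictScalars ℝ)).comp D)) with hLψ
  have hψi : ∀ i, HasFDerivAt
      (fun q : Fin m → ℂ => q i - ∑ j, M (z q) i j * starRingEnd ℂ (q j)) (Lψ i) q₀ :=
    fun i => (hasFDerivAt_apply i q₀).sub (HasFDerivAt.fun_sum fun j _ => (hMzd i j).fun_mul (hconj j))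
  have hψ : HasFDerivAt (fun q : Fin m → ℂ => q - (M (z q)).mulVec fun i => starRingEnd ℂ (q i))
      (ContinuousLinearMap.pi Lψ) q₀ := hasFDerivAt_pi.mpr hψi
  have hG : HasFDerivAt (fun q => f ((q - (M (z q)).mulVec fun i => starRingEnd ℂ (q i)), z q))
      ((A.restrictScalars ℝ).comp ((ContinuousLinearMap.pi Lψ).prod D)) q₀ :=
    HasFDerivAt.comp (x := q₀) hfA (hψ.prodMk hzd.hasFDerivAt)
  have h0 : (fun q => f ((q - (M (z q)).mulVec fun i => starRingEnd ℂ (q i)), z q))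
      =ᶠ[nhds q₀] fun _ => 0 := by
    filter_upwards [hU.mem_nhds hq] with y hy
    rw [← hF]; exact hsol y hy
  have hkey1 : ∀ v, A ((fun i => v i - ∑ j, (M (z q₀) i j * starRingEnd ℂ (v j)
      + starRingEnd ℂ (q₀ j) * (D v * m' i j))), D v) = 0 := by
    intro v
    have h1 := clm_eval_zero' hG h0 v
    have h2 : ((ContinuousLinearMap.pi Lψ).prod D) v
        = ((fun i => v i - ∑ j, (M (z q₀) i j * starRingEnd ℂ (v j)
            + starRingEnd ℂ (q₀ j) * (D v * m' i j))), D v) := by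
      refine Prod.ext ?_ rfl
      funext i
      simp [hLψ, ContinuousLinearMap.sum_apply, smul_eq_mul]
    rw [ContinuousLinearMap.comp_apply, h2] at h1
    simpa using h1

  have hsplit : ∀ v : Fin m → ℂ,
      A ((fun i => v i - ∑ j, M (z q₀) i j * starRingEnd ℂ (v j)), (0:ℂ)) + D v * c' = 0 := by
    intro v
    have hpair : (((fun i => v i - ∑ j, (M (z q₀) i j * starRingEnd ℂ (v j)
        + starRingEnd ℂ (q₀ j) * (D v * m' i j))), D v) : (Fin m → ℂ) × ℂ)
        = ((fun i => v i - ∑ j, M (z q₀) i j * starRingEnd ℂ (v j)), (0:ℂ))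
          + (D v) • (((fun i => -(∑ j, m' i j * starRingEnd ℂ (q₀ j))), (1:ℂ))
            : (Fin m → ℂ) × ℂ) := by
      refine Prod.ext ?_ ?_
      · funext i
        simp only [Prod.fst_add, Prod.smul_fst, Pi.add_apply, Pi.smul_apply, smul_eq_mul,
          Finset.sum_add_distrib, Finset.mul_sum]
        have hx : ∑ x, starRingEnd ℂ (q₀ x) * (D v * m' i x)
            = D v * ∑ j, m' i j * starRingEnd ℂ (q₀ j) := by
          rw [Finset.mul_sum]; exact Finset.sum_congr rfl fun x _ => by ring
        linear_combination -hx
      · simp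
    have h := hkey1 v
    rw [hpair, map_add, A.map_smul, smul_eq_mul, ← hc'def] at h
    exact h
  have hexp : ∀ v : Fin m → ℂ,
      A ((fun i => v i - ∑ j, M (z q₀) i j * starRingEnd ℂ (v j)), (0:ℂ))
      = ∑ i, A (Pi.single i 1, 0) * v i
        - ∑ j, (∑ i, M (z q₀) i j * A (Pi.single i 1, 0)) * starRingEnd ℂ (v j) := by
    intro v
    rw [A_pi']
    have h1 : ∀ i ∈ Finset.univ,
        (v i - ∑ j, M (z q₀) i j * starRingEnd ℂ (v j)) * A (Pi.single i 1, 0)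
        = A (Pi.single i 1, 0) * v i
          - ∑ j, (M (z q₀) i j * A (Pi.single i 1, 0)) * starRingEnd ℂ (v j) := by
      intro i _
      rw [sub_mul, Finset.sum_mul]
      congr 1
      · ring
      · exact Finset.sum_congr rfl fun j _ => by ring
    rw [Finset.sum_congr rfl h1, Finset.sum_sub_distrib]
    congr 1
    rw [Finset.sum_comm]
    exact Finset.sum_congr rfl fun j _ => (Finset.sum_mul _ _ _).symm
  have hDform : ∀ v : Fin m → ℂ, D v
      = ((∑ j, (∑ i, M (z q₀) i j * A (Pi.single i 1, 0)) * starRingEnd ℂ (v j))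
          - ∑ i, A (Pi.single i 1, 0) * v i) / c' := by
    intro v
    rw [eq_div_iff hc0]
    have h := hsplit v
    rw [hexp v] at h
    linear_combination h
  -- frozen derivative (z fixed at z q₀)
  have hfrozi : ∀ i, HasFDerivAt
      (fun q : Fin m → ℂ => q i - ∑ j, M (z q₀) i j * starRingEnd ℂ (q j))
      (ContinuousLinearMap.proj i - ∑ j, M (z q₀) i j •
        (((RCLike.conjCLE (K := ℂ)).toContinuousLinearMap).comp (ContinuousLinearMap.proj j)))
      q₀ :=
    fun i => (hasFDerivAt_apply i q₀).sub (HasFDerivAt.fun_sum fun j _ => (hconj j).const_mul _)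
  have hfrozψ : HasFDerivAt
      (fun q : Fin m → ℂ => q - (M (z q₀)).mulVec fun i => starRingEnd ℂ (q i))
      (ContinuousLinearMap.pi (fun i => ContinuousLinearMap.proj i - ∑ j, M (z q₀) i j •
        (((RCLike.conjCLE (K := ℂ)).toContinuousLinearMap).comp (ContinuousLinearMap.proj j))))
      q₀ := hasFDerivAt_pi.mpr hfrozi
  have hGf : HasFDerivAt (fun q => f ((q - (M (z q₀)).mulVec fun i => starRingEnd ℂ (q i)), z q₀))
      ((A.restrictScalars ℝ).comp
        ((ContinuousLinearMap.pi (fun i => ContinuousLinearMap.proj i - ∑ j, M (z q₀) i j •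
          (((RCLike.conjCLE (K := ℂ)).toContinuousLinearMap).comp
            (ContinuousLinearMap.proj j)))).prod (0 : (Fin m → ℂ) →L[ℝ] ℂ))) q₀ :=
    HasFDerivAt.comp (x := q₀) hfA (hfrozψ.prodMk (hasFDerivAt_const (z q₀) q₀))
  have hFfroz : (fun p' => F p' (z q₀))
      = fun q => f ((q - (M (z q₀)).mulVec fun i => starRingEnd ℂ (q i)), z q₀) :=
    funext fun p' => hF p' (z q₀)
  have hfda : ∀ v, fderiv ℝ (fun p' => F p' (z q₀)) q₀ v
      = A ((fun i => v i - ∑ j, M (z q₀) i j * starRingEnd ℂ (v j)), (0:ℂ)) := by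
    intro v
    rw [hFfroz, hGf.fderiv]
    rw [ContinuousLinearMap.comp_apply, ContinuousLinearMap.coe_restrictScalars']
    congr 1
    refine Prod.ext ?_ rfl
    funext i
    simp [ContinuousLinearMap.sum_apply, smul_eq_mul]

  have hs1 : ∀ (g : Fin m → ℂ) (i : Fin m), ∑ k, g k * ((Pi.single i 1 : Fin m → ℂ) k) = g i := by
    intro g i
    simp [Pi.single_apply, mul_ite, Finset.sum_ite_eq']
  have hs2 : ∀ (g : Fin m → ℂ) (i : Fin m), ∑ k, g k * ((Pi.single i Complex.I : Fin m → ℂ) k) = g i * I := by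
    intro g i
    simp [Pi.single_apply, mul_ite, Finset.sum_ite_eq']
  have hsc1 : ∀ (g : Fin m → ℂ) (i : Fin m),
      ∑ k, g k * starRingEnd ℂ ((Pi.single i 1 : Fin m → ℂ) k) = g i := by
    intro g i
    simp [Pi.single_apply, apply_ite (starRingEnd ℂ), mul_ite, Finset.sum_ite_eq']
  have hsc2 : ∀ (g : Fin m → ℂ) (i : Fin m),
      ∑ k, g k * starRingEnd ℂ ((Pi.single i Complex.I : Fin m → ℂ) k) = -(g i * I) := by
    intro g i
    simp [Pi.single_apply, apply_ite (starRingEnd ℂ), mul_ite, Finset.sum_ite_eq', Complex.conj_I]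
  have hfw : ∀ i, wdq (fun p' => F p' (z q₀)) i q₀ = A (Pi.single i 1, 0) := by
    intro i
    simp only [wdq, pdRe, pdIm]
    rw [hfda, hfda, hexp, hexp, hsc1, hsc2, hs1, hs2]
    linear_combination (-(A (Pi.single i 1, 0))/2
      - (∑ x, M (z q₀) x i * A (Pi.single x 1, 0))/2) * Complex.I_sq
  have hfwbar : ∀ i, wdqbar (fun p' => F p' (z q₀)) i q₀
      = -∑ k, M (z q₀) k i * A (Pi.single k 1, 0) := by
    intro i
    simp only [wdqbar, pdRe, pdIm]
    rw [hfda, hfda, hexp, hexp, hsc1, hsc2, hs1, hs2]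
    linear_combination ((A (Pi.single i 1, 0))/2
      + (∑ x, M (z q₀) x i * A (Pi.single x 1, 0))/2) * Complex.I_sq
  exact ⟨fun i => A (Pi.single i 1, 0), c', hc0, hDform, hfw, hfwbar⟩



set_option maxHeartbeats 2000000 in
/-- implicitly defined harmonic morphisms, `k = 1`: if `z : U → V ⊆ ℂ`
is a smooth solution of `F(q, z(q)) = 0`, `F(q,z) = f(q − M(z)q̄, z)`, with
`(∂F/∂z)(q, z(q)) ≠ 0`, then `z` is `(M∘z)`-holomorphic, `Δz = 0` and
`Σ_i (∂z/∂x^i)² = 0` (so `z` is a harmonic morphism), and `z` is submersive at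
every point where some Wirtinger partial of `F(·, z(q))` in the variables
`q^1,…,q^m,q̄^1,…,q̄^m` is nonzero. -/
theorem implicit_harmonic_morphism_k_one {m : ℕ}
    (W : Set ((Fin m → ℂ) × ℂ)) (hW : IsOpen W)
    (V : Set ℂ) (hV : IsOpen V)
    (f : (Fin m → ℂ) × ℂ → ℂ) (hf : DifferentiableOn ℂ f W)
    (M : ℂ → Matrix (Fin m) (Fin m) ℂ)
    (hskew : ∀ v ∈ V, (M v)ᵀ = -(M v))
    (hM : ∀ i j, DifferentiableOn ℂ (fun w => M w i j) V)
    (F : (Fin m → ℂ) → ℂ → ℂ)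
    (hF : ∀ q z, F q z = f (q - (M z).mulVec (fun i => starRingEnd ℂ (q i)), z))
    (U : Set (Fin m → ℂ)) (hU : IsOpen U)
    (z : (Fin m → ℂ) → ℂ) (hz : ContDiffOn ℝ (⊤ : ℕ∞) z U)
    (hzV : Set.MapsTo z U V)
    (hmem : ∀ q ∈ U, (q - (M (z q)).mulVec (fun i => starRingEnd ℂ (q i)), z q) ∈ W)
    (hsol : ∀ q ∈ U, F q (z q) = 0)
    (hFz : ∀ q ∈ U, deriv (fun zz => F q zz) (z q) ≠ 0) :
    (∀ q ∈ U, ∀ i, wdqbar z i q + ∑ j, M (z q) j i * wdq z j q = 0)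
    ∧ (∀ q ∈ U, lap z q = 0 ∧ hwc z q = 0)
    ∧ (∀ q ∈ U,
        (∃ i, wdq (fun p => F p (z q)) i q ≠ 0 ∨ wdqbar (fun p => F p (z q)) i q ≠ 0)
        → Function.Surjective (fderiv ℝ z q)) := by
  have hskew' : ∀ w ∈ V, ∀ i j, M w i j = -(M w j i) := by
    intro w hw i j
    have h := congrFun (congrFun (hskew w hw) j) i
    simpa [Matrix.transpose_apply] using h
  have hs1 : ∀ (g : Fin m → ℂ) (i : Fin m), ∑ k, g k * ((Pi.single i 1 : Fin m → ℂ) k) = g i := by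
    intro g i
    simp [Pi.single_apply, mul_ite, Finset.sum_ite_eq']
  have hs2 : ∀ (g : Fin m → ℂ) (i : Fin m),
      ∑ k, g k * ((Pi.single i Complex.I : Fin m → ℂ) k) = g i * I := by
    intro g i
    simp [Pi.single_apply, mul_ite, Finset.sum_ite_eq']
  have hsc1 : ∀ (g : Fin m → ℂ) (i : Fin m),
      ∑ k, g k * starRingEnd ℂ ((Pi.single i 1 : Fin m → ℂ) k) = g i := by
    intro g i
    simp [Pi.single_apply, apply_ite (starRingEnd ℂ), mul_ite, Finset.sum_ite_eq']
  have hsc2 : ∀ (g : Fin m → ℂ) (i : Fin m),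
      ∑ k, g k * starRingEnd ℂ ((Pi.single i Complex.I : Fin m → ℂ) k) = -(g i * I) := by
    intro g i
    simp [Pi.single_apply, apply_ite (starRingEnd ℂ), mul_ite, Finset.sum_ite_eq',
      Complex.conj_I]
  -- Part 1 : (M ∘ z)-holomorphy
  have hpart1 : ∀ q ∈ U, ∀ i, wdqbar z i q + ∑ j, M (z q) j i * wdq z j q = 0 := by
    intro q hq i
    obtain ⟨a, c', hc0, hD, -, -⟩ :=
      key W hW V hV f hf M hM F hF U hU z hz hzV hmem hsol hFz q hq
    have hwdq : ∀ k, wdq z k q = -a k / c' := by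
      intro k
      simp only [wdq, pdRe, pdIm]
      rw [hD, hD, hsc1, hsc2, hs1, hs2]
      linear_combination ((∑ x, M (z q) x k * a x) + a k)/(2*c') * Complex.I_sq
    have hwdqbar : wdqbar z i q = (∑ x, M (z q) x i * a x) / c' := by
      simp only [wdqbar, pdRe, pdIm]
      rw [hD, hD, hsc1, hsc2, hs1, hs2]
      linear_combination (-(∑ x, M (z q) x i * a x) - a i)/(2*c') * Complex.I_sq
    rw [hwdqbar]
    have hrw : ∑ j, M (z q) j i * wdq z j q = (∑ j, -(M (z q) j i * a j)) / c' := by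
      rw [Finset.sum_div]
      exact Finset.sum_congr rfl fun j _ => by rw [hwdq j]; ring
    rw [hrw, Finset.sum_neg_distrib]
    field_simp
    ring
  refine ⟨hpart1, ?_, ?_⟩
  · -- Part 2 : harmonic and horizontally weakly conformal
    intro q hq
    constructor
    · -- Laplacian
      have hzAt : ContDiffAt ℝ ((⊤:ℕ∞) : WithTop ℕ∞) z q := hz.contDiffAt (hU.mem_nhds hq)
      have hzd : DifferentiableAt ℝ z q := hzAt.differentiableAt (by norm_cast)
      have hBd : DifferentiableAt ℝ (fderiv ℝ z) q :=
        (hzAt.fderiv_right (m := 1) (by norm_cast)).differentiableAt one_ne_zero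
      set H : (Fin m → ℂ) →L[ℝ] (Fin m → ℂ) →L[ℝ] ℂ := fderiv ℝ (fderiv ℝ z) q with hHdef
      have hsym : ∀ v w : Fin m → ℂ, H v w = H w v :=
        fun v w => (hzAt.isSymmSndFDerivAt (by simp; exact WithTop.coe_le_coe.mpr le_top)) v w
      have hBv : ∀ v : Fin m → ℂ, HasFDerivAt (fun y => fderiv ℝ z y v)
          ((ContinuousLinearMap.apply ℝ ℂ v).comp H) q :=
        fun v => ((ContinuousLinearMap.apply ℝ ℂ v).hasFDerivAt).comp q hBd.hasFDerivAt
      have hzqV : z q ∈ V := hzV hq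
      have hMder : ∀ k j, HasDerivAt (fun w => M w k j) (deriv (fun w => M w k j) (z q)) (z q) :=
        fun k j => ((hM k j _ hzqV).differentiableAt (hV.mem_nhds hzqV)).hasDerivAt
      have hMc : ∀ k j, HasFDerivAt (fun y => M (z y) k j)
          ((((1 : ℂ →L[ℂ] ℂ).smulRight (deriv (fun w => M w k j) (z q))).restrictScalars ℝ).comp
            (fderiv ℝ z q)) q :=
        fun k j => HasFDerivAt.comp (x := q) (((hMder k j).hasFDerivAt).restrictScalars ℝ)
          hzd.hasFDerivAt
      have hwdqf : ∀ k, HasFDerivAt (fun y => wdq z k y)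
          ((2:ℂ)⁻¹ • (((ContinuousLinearMap.apply ℝ ℂ (Pi.single k 1)).comp H)
            - I • ((ContinuousLinearMap.apply ℝ ℂ (Pi.single k Complex.I)).comp H))) q :=
        fun k => hasFDerivAt_div_const'
          ((hBv (Pi.single k 1)).sub ((hBv (Pi.single k Complex.I)).const_mul I)) 2
      have hwbarf : ∀ j, HasFDerivAt (fun y => wdqbar z j y)
          ((2:ℂ)⁻¹ • (((ContinuousLinearMap.apply ℝ ℂ (Pi.single j 1)).comp H)
            + I • ((ContinuousLinearMap.apply ℝ ℂ (Pi.single j Complex.I)).comp H))) q :=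
        fun j => hasFDerivAt_div_const'
          ((hBv (Pi.single j 1)).add ((hBv (Pi.single j Complex.I)).const_mul I)) 2
      have h0Φ : ∀ j, (fun y => wdqbar z j y + ∑ k, M (z y) k j * wdq z k y)
          =ᶠ[nhds q] fun _ => 0 := by
        intro j
        filter_upwards [hU.mem_nhds hq] with y hy
        exact hpart1 y hy j
      have hEqs : ∀ (j : Fin m) (v : Fin m → ℂ),
          (2:ℂ)⁻¹ * (H v (Pi.single j 1) + I * H v (Pi.single j Complex.I))
          + ∑ k, (M (z q) k j * ((2:ℂ)⁻¹ * (H v (Pi.single k 1) - I * H v (Pi.single k Complex.I)))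
              + wdq z k q * (fderiv ℝ z q v * deriv (fun w => M w k j) (z q))) = 0 := by
        intro j v
        have h := clm_eval_zero' ((hwbarf j).fun_add (HasFDerivAt.fun_sum fun k _ =>
          (hMc k j).fun_mul (hwdqf k))) (h0Φ j) v
        simpa [ContinuousLinearMap.apply_apply, smul_eq_mul, mul_sub, mul_add] using h
      have hm'skew : ∀ k j, deriv (fun w => M w k j) (z q) = -deriv (fun w => M w j k) (z q) := by
        intro k j
        have hev : (fun w => M w k j) =ᶠ[nhds (z q)] fun w => -(M w j k) := by
          filter_upwards [hV.mem_nhds hzqV] with w hw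
          exact hskew' w hw k j
        rw [hev.deriv_eq, deriv.fun_neg]
      have hconv : ∀ j : Fin m, ∑ k, (M (z q) k j * ((2:ℂ)⁻¹ * (H (Pi.single j 1) (Pi.single k 1) - H (Pi.single j Complex.I) (Pi.single k Complex.I) - I * H (Pi.single j 1) (Pi.single k Complex.I) - I * H (Pi.single j Complex.I) (Pi.single k 1))) + 2 * deriv (fun w => M w k j) (z q) * (wdq z j q * wdq z k q))
          = (∑ k, (M (z q) k j * ((2:ℂ)⁻¹ * (H (Pi.single j 1) (Pi.single k 1) - I * H (Pi.single j 1) (Pi.single k Complex.I))) + wdq z k q * (fderiv ℝ z q (Pi.single j 1) * deriv (fun w => M w k j) (z q)))) - I * ∑ k, (M (z q) k j * ((2:ℂ)⁻¹ * (H (Pi.single j Complex.I) (Pi.single k 1) - I * H (Pi.single j Complex.I) (Pi.single k Complex.I))) + wdq z k q * (fderiv ℝ z q (Pi.single j Complex.I) * deriv (fun w => M w k j) (z q))) := by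
        intro j
        rw [Finset.mul_sum, ← Finset.sum_sub_distrib]
        refine Finset.sum_congr rfl fun k _ => ?_
        have hwj : wdq z j q = (2:ℂ)⁻¹ * (fderiv ℝ z q (Pi.single j 1)
            - I * fderiv ℝ z q (Pi.single j Complex.I)) := by
          simp only [wdq, pdRe, pdIm]; ring
        linear_combination (2 * (deriv (fun w => M w k j) (z q)) * wdq z k q) * hwj
          + (-(M (z q) k j * H (Pi.single j Complex.I) (Pi.single k Complex.I))/2) * Complex.I_sq
      have hterm0 : ∀ j ∈ Finset.univ, (((2:ℂ)⁻¹ * (H (Pi.single j 1) (Pi.single j 1) + H (Pi.single j Complex.I) (Pi.single j Complex.I))) + ∑ k, (M (z q) k j * ((2:ℂ)⁻¹ * (H (Pi.single j 1) (Pi.single k 1) - H (Pi.single j Complex.I) (Pi.single k Complex.I) - I * H (Pi.single j 1) (Pi.single k Complex.I) - I * H (Pi.single j Complex.I) (Pi.single k 1))) + 2 * deriv (fun w => M w k j) (z q) * (wdq z j q * wdq z k q))) = 0 := by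
        intro j _
        rw [hconv j]
        have hE1 := hEqs j (Pi.single j 1)
        have hE2 := hEqs j (Pi.single j Complex.I)
        have hsy := hsym (Pi.single j 1) (Pi.single j Complex.I)
        linear_combination hE1 - I * hE2 - I/2 * hsy
          + (H (Pi.single j Complex.I) (Pi.single j Complex.I))/2 * Complex.I_sq
      have hsumz := Finset.sum_eq_zero hterm0
      rw [Finset.sum_add_distrib] at hsumz
      have hz1 : (∑ j, ∑ k, M (z q) k j * ((2:ℂ)⁻¹ * (H (Pi.single j 1) (Pi.single k 1) - H (Pi.single j Complex.I) (Pi.single k Complex.I) - I * H (Pi.single j 1) (Pi.single k Complex.I) - I * H (Pi.single j Complex.I) (Pi.single k 1)))) = 0 := by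
        refine sum_skew' (fun j k => M (z q) k j) (fun j k => ((2:ℂ)⁻¹ * (H (Pi.single j 1) (Pi.single k 1) - H (Pi.single j Complex.I) (Pi.single k Complex.I) - I * H (Pi.single j 1) (Pi.single k Complex.I) - I * H (Pi.single j Complex.I) (Pi.single k 1))))
          (fun j k => hskew' (z q) hzqV k j) ?_
        intro j k
        beta_reduce
        linear_combination (hsym (Pi.single j 1) (Pi.single k 1))/2
          - (hsym (Pi.single j Complex.I) (Pi.single k Complex.I))/2
          - I/2 * (hsym (Pi.single j 1) (Pi.single k Complex.I))
          - I/2 * (hsym (Pi.single j Complex.I) (Pi.single k 1))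
      have hz2 : (∑ j, ∑ k, 2 * deriv (fun w => M w k j) (z q) * (wdq z j q * wdq z k q)) = 0 := by
        refine sum_skew' (fun j k => 2 * deriv (fun w => M w k j) (z q))
          (fun j k => wdq z j q * wdq z k q)
          (fun j k => by beta_reduce; rw [hm'skew k j]; ring)
          (fun j k => mul_comm _ _)
      have hsplitin : (∑ j, ∑ k, (M (z q) k j * ((2:ℂ)⁻¹ * (H (Pi.single j 1) (Pi.single k 1) - H (Pi.single j Complex.I) (Pi.single k Complex.I) - I * H (Pi.single j 1) (Pi.single k Complex.I) - I * H (Pi.single j Complex.I) (Pi.single k 1))) + 2 * deriv (fun w => M w k j) (z q) * (wdq z j q * wdq z k q)))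
          = (∑ j, ∑ k, M (z q) k j * ((2:ℂ)⁻¹ * (H (Pi.single j 1) (Pi.single k 1) - H (Pi.single j Complex.I) (Pi.single k Complex.I) - I * H (Pi.single j 1) (Pi.single k Complex.I) - I * H (Pi.single j Complex.I) (Pi.single k 1))))
            + (∑ j, ∑ k, 2 * deriv (fun w => M w k j) (z q) * (wdq z j q * wdq z k q)) := by
        rw [← Finset.sum_add_distrib]
        exact Finset.sum_congr rfl fun j _ => Finset.sum_add_distrib
      rw [hsplitin, hz1, hz2, add_zero, add_zero] at hsumz
      have hlap : lap z q = ∑ j, (H (Pi.single j 1) (Pi.single j 1)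
          + H (Pi.single j Complex.I) (Pi.single j Complex.I)) := by
        simp only [lap]
        refine Finset.sum_congr rfl fun j _ => ?_
        simp only [pdRe, pdIm]
        have h1 : fderiv ℝ (fun y => fderiv ℝ z y (Pi.single j 1)) q
            = (ContinuousLinearMap.apply ℝ ℂ (Pi.single j 1)).comp H := (hBv (Pi.single j 1)).fderiv
        have h2 : fderiv ℝ (fun y => fderiv ℝ z y (Pi.single j Complex.I)) q
            = (ContinuousLinearMap.apply ℝ ℂ (Pi.single j Complex.I)).comp H :=
          (hBv (Pi.single j Complex.I)).fderiv
        rw [h1, h2]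
        simp [ContinuousLinearMap.apply_apply]
      rw [hlap]
      have hdouble : ∑ j, (H (Pi.single j 1) (Pi.single j 1)
            + H (Pi.single j Complex.I) (Pi.single j Complex.I))
          = 2 * ∑ j, ((2:ℂ)⁻¹ * (H (Pi.single j 1) (Pi.single j 1) + H (Pi.single j Complex.I) (Pi.single j Complex.I))) := by
        rw [Finset.mul_sum]
        exact Finset.sum_congr rfl fun j _ => by ring
      rw [hdouble, hsumz, mul_zero]
    · -- hwc
      obtain ⟨a, c', hc0, hD, -, -⟩ :=
        key W hW V hV f hf M hM F hF U hU z hz hzV hmem hsol hFz q hq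
      have hterm : ∀ i ∈ Finset.univ, pdRe z i q ^ 2 + pdIm z i q ^ 2
          = (a i * ∑ x, M (z q) x i * a x) * (-4 / c' ^ 2) := by
        intro i _
        simp only [pdRe, pdIm]
        rw [hD, hD, hsc1, hsc2, hs1, hs2]
        linear_combination (((∑ x, M (z q) x i * a x) + a i)^2/c'^2) * Complex.I_sq
      rw [hwc, Finset.sum_congr rfl hterm, ← Finset.sum_mul]
      have hzero : ∑ i, a i * ∑ x, M (z q) x i * a x = 0 := by
        have hsk := sum_skew' (fun i x => M (z q) x i) (fun i x => a x * a i)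
          (fun i x => hskew' (z q) (hzV hq) x i)
          (fun i x => mul_comm (a x) (a i))
        rw [← hsk]
        refine Finset.sum_congr rfl fun i _ => ?_
        rw [Finset.mul_sum]
        exact Finset.sum_congr rfl fun x _ => by ring
      rw [hzero, zero_mul]
  · -- Part 3 : submersive
    intro q hq hex
    obtain ⟨a, c', hc0, hD, hfw, hfwbar⟩ :=
      key W hW V hV f hf M hM F hF U hU z hz hzV hmem hsol hFz q hq
    have hane : ∃ k, a k ≠ 0 := by
      obtain ⟨i, hi | hi⟩ := hex
      · exact ⟨i, by rw [hfw i] at hi; exact hi⟩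
      · rw [hfwbar i] at hi
        have hne : ∑ k, M (z q) k i * a k ≠ 0 := fun h => hi (by rw [h, neg_zero])
        obtain ⟨k, -, hk⟩ := Finset.exists_ne_zero_of_sum_ne_zero hne
        exact ⟨k, fun h0 => hk (by rw [h0, mul_zero])⟩
    obtain ⟨k0, hk0⟩ := hane
    have hT : (∑ i, a i * starRingEnd ℂ (a i)) ≠ 0 := by
      have hTr : (∑ i, a i * starRingEnd ℂ (a i))
          = ((∑ i, Complex.normSq (a i) : ℝ) : ℂ) := by
        push_cast
        exact Finset.sum_congr rfl fun i _ => (Complex.mul_conj (a i))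
      rw [hTr]
      rw [Complex.ofReal_ne_zero]
      have hpos : 0 < ∑ i, Complex.normSq (a i) :=
        Finset.sum_pos' (fun i _ => Complex.normSq_nonneg (a i))
          ⟨k0, Finset.mem_univ k0, Complex.normSq_pos.mpr hk0⟩
      exact ne_of_gt hpos
    have horth : ∑ j, (∑ x, M (z q) x j * a x) * a j = 0 := by
      have hsk := sum_skew' (fun j x => M (z q) x j) (fun j x => a x * a j)
        (fun j x => hskew' (z q) (hzV hq) x j)
        (fun j x => mul_comm (a x) (a j))
      rw [← hsk]
      refine Finset.sum_congr rfl fun j _ => ?_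
      rw [Finset.sum_mul]
      exact Finset.sum_congr rfl fun x _ => by ring
    intro c
    set T : ℂ := ∑ i, a i * starRingEnd ℂ (a i) with hTdef
    refine ⟨fun i => (-c * c' / T) * starRingEnd ℂ (a i), ?_⟩
    rw [hD]
    have h1 : ∑ j, (∑ x, M (z q) x j * a x)
        * starRingEnd ℂ ((-c * c' / T) * starRingEnd ℂ (a j))
        = starRingEnd ℂ (-c * c' / T) * ∑ j, (∑ x, M (z q) x j * a x) * a j := by
      rw [Finset.mul_sum]
      refine Finset.sum_congr rfl fun j _ => ?_
      rw [_root_.map_mul, Complex.conj_conj]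
      ring
    have h2 : ∑ i, a i * ((-c * c' / T) * starRingEnd ℂ (a i))
        = (-c * c' / T) * T := by
      rw [hTdef, Finset.mul_sum]
      refine Finset.sum_congr rfl fun i _ => ?_
      ring
    rw [h1, h2, horth, mul_zero]
    field_simp
    ring
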